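/- Let d ≥ 1, α ∈ (0,1) and T > 0. Let h : [0,T] × ℝ^d → ℝ be such that for each s ∈ [0,T] the function h(s, ·) is differentiable with gradient ∇h(s, ·) bounded and α-Hölder, the map s ↦ h(s, ·) is continuous into D𝒞^α, and M := sup_{s ∈ [0,T]} ( |h(s,0)| + ‖∇h(s,·)‖_∞ + [∇h(s,·)]_α ) < ∞. Define v(t,x) = ∫_t^T (P_{s−t} h(s,·))(x) ds. Then for every t ∈ [0,T] the function v(t,·) is differentiable with ∇v(t,·) bounded and α-Hölder, and sup_{t ∈ [0,T]} ( |v(t,0)| + ‖∇v(t,·)‖_∞ + [∇v(t,·)]_α ) ≤ c T M for a constant c depending only on d, α, T. -/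

import Mathlib

open MeasureTheory

/-- The heat kernel `p_t(x) = (2πt)^{-d/2} exp(-‖x‖²/(2t))` on `ℝ^d`. -/
noncomputable def heatKernel (d : ℕ) (t : ℝ) (x : EuclideanSpace ℝ (Fin d)) : ℝ :=
  (2 * Real.pi * t) ^ (-(d : ℝ) / 2) * Real.exp (-‖x‖ ^ 2 / (2 * t))

/-- The heat semigroup `P_t h (x) = ∫ p_t(x-y) h(y) dy` for `t > 0`, with `P_0 h = h`. -/
noncomputable def heatSemigroup (d : ℕ) (t : ℝ) (h : EuclideanSpace ℝ (Fin d) → ℝ)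
    (x : EuclideanSpace ℝ (Fin d)) : ℝ :=
  if t = 0 then h x else ∫ y, heatKernel d t (x - y) * h y

/-- The supremum norm `‖g‖_∞ = ⨆ x, ‖g x‖` of a function. -/
noncomputable def supNorm {E F : Type*} [NormedAddCommGroup F] (g : E → F) : ℝ :=
  ⨆ x, ‖g x‖

/-- The `γ`-Hölder seminorm `[g]_γ = sup_{x ≠ y} ‖g x - g y‖ / ‖x - y‖^γ`. -/
noncomputable def holderSem {E F : Type*} [NormedAddCommGroup E] [NormedAddCommGroup F]
    (γ : ℝ) (g : E → F) : ℝ :=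
  sSup {r : ℝ | ∃ x y : E, x ≠ y ∧ r = ‖g x - g y‖ / ‖x - y‖ ^ γ}

set_option synthInstance.maxHeartbeats 1000000
set_option maxHeartbeats 1000000

open Real Filter

section Aux

variable {d : ℕ}

local notation "E" => EuclideanSpace ℝ (Fin d)

lemma integrable_gauss {b : ℝ} (hb : 0 < b) :
    Integrable (fun v : E => Real.exp (-b * ‖v‖ ^ 2)) := by
  have h := GaussianFourier.integrable_cexp_neg_mul_sq_norm_add
    (V := EuclideanSpace ℝ (Fin d)) (b := (b : ℂ)) (by simpa using hb) 0 0
  have h2 := h.norm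
  refine h2.congr (Filter.Eventually.of_forall fun v => ?_)
  simp [Complex.norm_exp]
  left; norm_cast

lemma integral_gauss {b : ℝ} (hb : 0 < b) :
    ∫ v : E, Real.exp (-b * ‖v‖ ^ 2) = (Real.pi / b) ^ ((d : ℝ) / 2) := by
  rw [GaussianFourier.integral_rexp_neg_mul_sq_norm hb, finrank_euclideanSpace_fin]

lemma le_mul_exp_sq {c u : ℝ} (hc : 0 < c) (hu : 0 ≤ u) :
    u ≤ c * Real.exp ((u / c) ^ 2) := by
  set w := u / c with hw
  have hw0 : 0 ≤ w := by positivity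
  have key : w ≤ Real.exp (w ^ 2) := by
    rcases le_or_gt w 1 with h1 | h1
    · exact h1.trans (Real.one_le_exp (by positivity))
    · have : w ≤ w ^ 2 := by nlinarith
      calc w ≤ w + 1 := by linarith
        _ ≤ Real.exp w := Real.add_one_le_exp w
        _ ≤ Real.exp (w ^ 2) := Real.exp_le_exp.2 this
  have : u = c * w := by rw [hw]; field_simp
  rw [this]
  exact mul_le_mul_of_nonneg_left key hc.le

lemma hk_pos {τ : ℝ} (hτ : 0 < τ) (z : E) : 0 < heatKernel d τ z := by
  have : 0 < 2 * Real.pi * τ := by positivity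
  exact mul_pos (Real.rpow_pos_of_pos this _) (Real.exp_pos _)

lemma hk_eq {τ : ℝ} (hτ : 0 < τ) (z : E) :
    heatKernel d τ z
      = (2 * Real.pi * τ) ^ (-(d : ℝ) / 2) * Real.exp (-(2 * τ)⁻¹ * ‖z‖ ^ 2) := by
  rw [heatKernel]
  congr 1
  rw [neg_div, neg_mul, inv_mul_eq_div]

lemma hk_continuous {τ : ℝ} (hτ : 0 < τ) : Continuous (heatKernel d τ) := by
  apply Continuous.mul continuous_const
  exact Real.continuous_exp.comp ((continuous_norm.pow 2).neg.div_const _)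

lemma hk_integrable {τ : ℝ} (hτ : 0 < τ) : Integrable (heatKernel d τ) := by
  have hb : 0 < (2 * τ)⁻¹ := by positivity
  have := (integrable_gauss (d := d) hb).const_mul ((2 * Real.pi * τ) ^ (-(d : ℝ) / 2))
  exact this.congr (Filter.Eventually.of_forall fun z => (hk_eq hτ z).symm)

lemma hk_integral {τ : ℝ} (hτ : 0 < τ) : ∫ z : E, heatKernel d τ z = 1 := by
  have hb : 0 < (2 * τ)⁻¹ := by positivity
  have h2 : (0:ℝ) < 2 * Real.pi * τ := by positivity
  calc ∫ z : E, heatKernel d τ z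
      = ∫ z : E, (2 * Real.pi * τ) ^ (-(d : ℝ) / 2) * Real.exp (-(2 * τ)⁻¹ * ‖z‖ ^ 2) :=
        by congr 1; funext z; exact hk_eq hτ z
    _ = (2 * Real.pi * τ) ^ (-(d : ℝ) / 2) * ∫ z : E, Real.exp (-(2 * τ)⁻¹ * ‖z‖ ^ 2) :=
        integral_const_mul _ _
    _ = (2 * Real.pi * τ) ^ (-(d : ℝ) / 2) * (2 * Real.pi * τ) ^ ((d : ℝ) / 2) := by
        rw [integral_gauss hb]
        congr 2
        field_simp
    _ = 1 := by
        rw [← Real.rpow_add h2, neg_div, neg_add_cancel, Real.rpow_zero]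

lemma hk_mul_norm_le {τ : ℝ} (hτ : 0 < τ) (z : E) :
    heatKernel d τ z * ‖z‖
      ≤ 2 * Real.sqrt τ * ((2 * Real.pi * τ) ^ (-(d : ℝ) / 2)
          * Real.exp (-(4 * τ)⁻¹ * ‖z‖ ^ 2)) := by
  have hs : 0 < Real.sqrt τ := Real.sqrt_pos.2 hτ
  have hc : 0 < 2 * Real.sqrt τ := by positivity
  have hsq : (2 * Real.sqrt τ) ^ 2 = 4 * τ := by
    rw [mul_pow, Real.sq_sqrt hτ.le]; ring
  have h1 : ‖z‖ ≤ 2 * Real.sqrt τ * Real.exp ((4 * τ)⁻¹ * ‖z‖ ^ 2) := by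
    have := le_mul_exp_sq hc (norm_nonneg z)
    rwa [div_pow, hsq, div_eq_inv_mul] at this
  calc heatKernel d τ z * ‖z‖
      ≤ heatKernel d τ z * (2 * Real.sqrt τ * Real.exp ((4 * τ)⁻¹ * ‖z‖ ^ 2)) :=
        mul_le_mul_of_nonneg_left h1 (hk_pos hτ z).le
    _ = 2 * Real.sqrt τ * ((2 * Real.pi * τ) ^ (-(d : ℝ) / 2)
          * Real.exp (-(4 * τ)⁻¹ * ‖z‖ ^ 2)) := by
        rw [heatKernel]
        have hexp : Real.exp (-‖z‖ ^ 2 / (2 * τ)) * Real.exp ((4 * τ)⁻¹ * ‖z‖ ^ 2)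
            = Real.exp (-(4 * τ)⁻¹ * ‖z‖ ^ 2) := by
          rw [← Real.exp_add]
          congr 1
          field_simp
          ring
        calc (2 * Real.pi * τ) ^ (-(d : ℝ) / 2) * Real.exp (-‖z‖ ^ 2 / (2 * τ))
              * (2 * Real.sqrt τ * Real.exp ((4 * τ)⁻¹ * ‖z‖ ^ 2))
            = 2 * Real.sqrt τ * ((2 * Real.pi * τ) ^ (-(d : ℝ) / 2)
              * (Real.exp (-‖z‖ ^ 2 / (2 * τ)) * Real.exp ((4 * τ)⁻¹ * ‖z‖ ^ 2))) := by ring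
          _ = _ := by rw [hexp]

lemma hk_moment_integrable {τ : ℝ} (hτ : 0 < τ) :
    Integrable (fun z : E => heatKernel d τ z * ‖z‖) := by
  have hb : 0 < (4 * τ)⁻¹ := by positivity
  have hg : Integrable (fun z : E =>
      2 * Real.sqrt τ * ((2 * Real.pi * τ) ^ (-(d : ℝ) / 2)
        * Real.exp (-(4 * τ)⁻¹ * ‖z‖ ^ 2))) := by
    exact ((integrable_gauss (d := d) hb).const_mul _).const_mul _
  refine hg.mono' ?_ (Filter.Eventually.of_forall fun z => ?_)
  · exact ((hk_continuous hτ).mul continuous_norm).aestronglyMeasurable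
  · rw [Real.norm_eq_abs, abs_of_nonneg (mul_nonneg (hk_pos hτ z).le (norm_nonneg z))]
    exact hk_mul_norm_le hτ z

lemma hk_moment_le {τ T : ℝ} (hτ : 0 < τ) (hτT : τ ≤ T) :
    ∫ z : E, heatKernel d τ z * ‖z‖ ≤ 2 * Real.sqrt T * 2 ^ ((d : ℝ) / 2) := by
  have hb : 0 < (4 * τ)⁻¹ := by positivity
  have h2 : (0:ℝ) < 2 * Real.pi * τ := by positivity
  have step1 : ∫ z : E, heatKernel d τ z * ‖z‖
      ≤ ∫ z : E, 2 * Real.sqrt τ * ((2 * Real.pi * τ) ^ (-(d : ℝ) / 2)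
          * Real.exp (-(4 * τ)⁻¹ * ‖z‖ ^ 2)) := by
    refine integral_mono (hk_moment_integrable hτ)
      (((integrable_gauss (d := d) hb).const_mul _).const_mul _) ?_
    exact fun z => hk_mul_norm_le hτ z
  have step2 : ∫ z : E, 2 * Real.sqrt τ * ((2 * Real.pi * τ) ^ (-(d : ℝ) / 2)
          * Real.exp (-(4 * τ)⁻¹ * ‖z‖ ^ 2))
      = 2 * Real.sqrt τ * 2 ^ ((d : ℝ) / 2) := by
    rw [integral_const_mul, integral_const_mul, integral_gauss hb]
    have hππ : Real.pi / (4 * τ)⁻¹ = 2 * (2 * Real.pi * τ) := by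
      field_simp; ring
    rw [hππ, Real.mul_rpow (by norm_num) h2.le]
    have hone : (2 * Real.pi * τ) ^ (-(d : ℝ) / 2) * (2 * Real.pi * τ) ^ ((d : ℝ) / 2) = 1 := by
      rw [← Real.rpow_add h2, neg_div, neg_add_cancel, Real.rpow_zero]
    linear_combination (2 * Real.sqrt τ * 2 ^ ((d : ℝ) / 2)) * hone
  rw [step2] at step1
  refine step1.trans ?_
  have : Real.sqrt τ ≤ Real.sqrt T := Real.sqrt_le_sqrt hτT
  have h2pow : (0:ℝ) ≤ 2 ^ ((d : ℝ) / 2) := by positivity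
  nlinarith [Real.sqrt_nonneg τ]

section helpers

variable {X F : Type*} [NormedAddCommGroup X] [NormedAddCommGroup F]

lemma supNorm_nonneg (g : X → F) : 0 ≤ supNorm g :=
  Real.iSup_nonneg fun _ => norm_nonneg _

lemma le_supNorm {g : X → F} {C : ℝ} (hb : ∀ x, ‖g x‖ ≤ C) (x : X) : ‖g x‖ ≤ supNorm g :=
  le_ciSup ⟨C, by rintro r ⟨x, rfl⟩; exact hb x⟩ x

lemma supNorm_le {g : X → F} {C : ℝ} (hC : 0 ≤ C) (hb : ∀ x, ‖g x‖ ≤ C) : supNorm g ≤ C :=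
  Real.iSup_le hb hC

lemma holderSem_nonneg (γ : ℝ) (g : X → F) : 0 ≤ holderSem γ g := by
  refine Real.sSup_nonneg ?_
  rintro r ⟨x, y, hxy, rfl⟩
  positivity

lemma holderSem_le {γ : ℝ} {g : X → F} {C : ℝ} (hC : 0 ≤ C)
    (hb : ∀ x y, ‖g x - g y‖ ≤ C * ‖x - y‖ ^ γ) : holderSem γ g ≤ C := by
  refine Real.sSup_le ?_ hC
  rintro r ⟨x, y, hxy, rfl⟩
  have hpos : 0 < ‖x - y‖ ^ γ :=
    Real.rpow_pos_of_pos (norm_pos_iff.2 (sub_ne_zero.2 hxy)) _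
  rw [div_le_iff₀ hpos]
  exact hb x y

lemma le_holderSem {γ : ℝ} (hγ : 0 < γ) {g : X → F} {C : ℝ}
    (hb : ∀ x y, ‖g x - g y‖ ≤ C * ‖x - y‖ ^ γ) (x y : X) :
    ‖g x - g y‖ ≤ holderSem γ g * ‖x - y‖ ^ γ := by
  rcases eq_or_ne x y with rfl | hxy
  · simp [Real.zero_rpow hγ.ne']
  · have hpos : 0 < ‖x - y‖ ^ γ :=
      Real.rpow_pos_of_pos (norm_pos_iff.2 (sub_ne_zero.2 hxy)) _
    have hmem : ‖g x - g y‖ / ‖x - y‖ ^ γ ∈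
        {r : ℝ | ∃ a b : X, a ≠ b ∧ r = ‖g a - g b‖ / ‖a - b‖ ^ γ} := ⟨x, y, hxy, rfl⟩
    have hbdd : BddAbove {r : ℝ | ∃ a b : X, a ≠ b ∧ r = ‖g a - g b‖ / ‖a - b‖ ^ γ} := by
      refine ⟨C, ?_⟩
      rintro r ⟨a, b, hab, rfl⟩
      have hp : 0 < ‖a - b‖ ^ γ :=
        Real.rpow_pos_of_pos (norm_pos_iff.2 (sub_ne_zero.2 hab)) _
      rw [div_le_iff₀ hp]
      exact hb a b
    have := le_csSup hbdd hmem
    calc ‖g x - g y‖ = ‖g x - g y‖ / ‖x - y‖ ^ γ * ‖x - y‖ ^ γ := by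
          field_simp
      _ ≤ holderSem γ g * ‖x - y‖ ^ γ := by
          exact mul_le_mul_of_nonneg_right this hpos.le

lemma continuous_of_holder {g : X → F} {C γ : ℝ} (hγ : 0 < γ)
    (h : ∀ x y, ‖g x - g y‖ ≤ C * ‖x - y‖ ^ γ) : Continuous g := by
  rw [continuous_iff_continuousAt]
  intro x₀
  rw [ContinuousAt, tendsto_iff_dist_tendsto_zero]
  have hbound : ∀ x, dist (g x) (g x₀) ≤ C * ‖x - x₀‖ ^ γ := fun x => by
    rw [dist_eq_norm]; exact h x x₀
  refine squeeze_zero (fun x => dist_nonneg) hbound ?_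
  have hcont : Tendsto (fun x => C * ‖x - x₀‖ ^ γ) (nhds x₀)
      (nhds (C * ‖x₀ - x₀‖ ^ γ)) := by
    refine Tendsto.const_mul _ ?_
    exact (((continuous_id.sub continuous_const).norm).continuousAt).rpow_const
      (Or.inr hγ.le)
  simpa [sub_self, Real.zero_rpow hγ.ne'] using hcont

end helpers

section gradhelp

variable {f : EuclideanSpace ℝ (Fin d) → ℝ}

lemma norm_gradient_eq (f : EuclideanSpace ℝ (Fin d) → ℝ) (x : E) :
    ‖gradient f x‖ = ‖fderiv ℝ f x‖ := by
  rw [gradient]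
  exact LinearIsometryEquiv.norm_map _ _

lemma norm_gradient_sub_eq (f g : EuclideanSpace ℝ (Fin d) → ℝ) (x y : E) :
    ‖gradient f x - gradient g y‖ = ‖fderiv ℝ f x - fderiv ℝ g y‖ := by
  rw [gradient, gradient, ← map_sub]
  exact LinearIsometryEquiv.norm_map _ _

end gradhelp

def Nice (d : ℕ) (α M : ℝ) (f : EuclideanSpace ℝ (Fin d) → ℝ) : Prop :=
  Differentiable ℝ f ∧ |f 0| ≤ M ∧ (∀ y, ‖fderiv ℝ f y‖ ≤ M) ∧
    ∀ x y, ‖fderiv ℝ f x - fderiv ℝ f y‖ ≤ M * ‖x - y‖ ^ α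

namespace Nice

variable {α M : ℝ} {f : EuclideanSpace ℝ (Fin d) → ℝ}

lemma M_nonneg (hf : Nice d α M f) : 0 ≤ M := (abs_nonneg _).trans hf.2.1

lemma growth (hf : Nice d α M f) (y : E) : |f y| ≤ M * (1 + ‖y‖) := by
  have key : ‖f y - f 0‖ ≤ M * ‖y - 0‖ :=
    Convex.norm_image_sub_le_of_norm_fderiv_le (fun x _ => hf.1 x)
      (fun x _ => hf.2.2.1 x) convex_univ (Set.mem_univ 0) (Set.mem_univ y)
  rw [Real.norm_eq_abs, sub_zero] at key
  calc |f y| ≤ |f 0| + |f y - f 0| := by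
        have := abs_add_le (f 0) (f y - f 0); simpa using this
    _ ≤ M + M * ‖y‖ := add_le_add hf.2.1 key
    _ = M * (1 + ‖y‖) := by ring

lemma fderiv_continuous (hα : 0 < α) (hf : Nice d α M f) :
    Continuous (fun y : E => fderiv ℝ f y) :=
  continuous_of_holder hα hf.2.2.2

end Nice

noncomputable def hsDeriv (d : ℕ) (τ : ℝ) (f : EuclideanSpace ℝ (Fin d) → ℝ)
    (x : EuclideanSpace ℝ (Fin d)) : EuclideanSpace ℝ (Fin d) →L[ℝ] ℝ :=
  if τ = 0 then fderiv ℝ f x else ∫ z, heatKernel d τ z • fderiv ℝ f (x - z)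

lemma hs_rep {τ : ℝ} (hτ : τ ≠ 0) (f : EuclideanSpace ℝ (Fin d) → ℝ) (x : E) :
    heatSemigroup d τ f x = ∫ z, heatKernel d τ z * f (x - z) := by
  rw [heatSemigroup, if_neg hτ]
  rw [← MeasureTheory.integral_sub_left_eq_self
    (μ := volume) (fun z => heatKernel d τ z * f (x - z)) x]
  simp

section inner

variable {α M : ℝ} {f : EuclideanSpace ℝ (Fin d) → ℝ} {τ T : ℝ}

lemma hsDeriv_integrand_integrable (hα : 0 < α) (hf : Nice d α M f) (hτ : 0 < τ) (x : E) :
    Integrable (fun z : E => heatKernel d τ z • fderiv ℝ f (x - z)) := by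
  refine ((hk_integrable hτ).mul_const M).mono' ?_ (Filter.Eventually.of_forall fun z => ?_)
  · exact ((hk_continuous hτ).smul ((hf.fderiv_continuous hα).comp
      (continuous_const.sub continuous_id))).aestronglyMeasurable
  · have hns : ‖heatKernel d τ z • fderiv ℝ f (x - z)‖
        = heatKernel d τ z * ‖fderiv ℝ f (x - z)‖ := by
      simp [norm_smul, abs_of_nonneg (hk_pos hτ z).le]
    rw [hns]
    exact mul_le_mul_of_nonneg_left (hf.2.2.1 _) (hk_pos hτ z).le

lemma hsDeriv_hasFDerivAt (hα : 0 < α) (hf : Nice d α M f) (hτ : 0 ≤ τ) (x₀ : E) :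
    HasFDerivAt (heatSemigroup d τ f) (hsDeriv d τ f x₀) x₀ := by
  rcases hτ.eq_or_lt with rfl | hτ
  · have hfun : heatSemigroup d 0 f = f := by
      funext x; rw [heatSemigroup, if_pos rfl]
    rw [hfun, hsDeriv, if_pos rfl]
    exact (hf.1 x₀).hasFDerivAt
  · have hfun : heatSemigroup d τ f = fun x => ∫ z, heatKernel d τ z * f (x - z) := by
      funext x; exact hs_rep hτ.ne' f x
    rw [hfun, hsDeriv, if_neg hτ.ne']
    apply hasFDerivAt_integral_of_dominated_of_fderiv_le (s := Metric.ball x₀ 1)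
      (bound := fun z => heatKernel d τ z * (M * (1 + ‖x₀‖ + 1) + M * ‖z‖))
      (F' := fun x z => heatKernel d τ z • fderiv ℝ f (x - z)) (Metric.ball_mem_nhds x₀ one_pos)
    · exact Filter.Eventually.of_forall fun x =>
        ((hk_continuous hτ).mul (hf.1.continuous.comp
          (continuous_const.sub continuous_id))).aestronglyMeasurable
    · refine ((hk_integrable hτ).mul_const (M * (1 + ‖x₀‖))).add
        ((hk_moment_integrable hτ).mul_const M) |>.mono' ?_
        (Filter.Eventually.of_forall fun z => ?_)
      · exact ((hk_continuous hτ).mul (hf.1.continuous.comp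
          (continuous_const.sub continuous_id))).aestronglyMeasurable
      · have h1 : |f (x₀ - z)| ≤ M * (1 + ‖x₀‖) + M * ‖z‖ := by
          have := hf.growth (x₀ - z)
          have hn : ‖x₀ - z‖ ≤ ‖x₀‖ + ‖z‖ := norm_sub_le _ _
          nlinarith [hf.M_nonneg]
        rw [Real.norm_eq_abs, abs_mul, abs_of_nonneg (hk_pos hτ z).le]
        calc heatKernel d τ z * |f (x₀ - z)|
            ≤ heatKernel d τ z * (M * (1 + ‖x₀‖) + M * ‖z‖) :=
              mul_le_mul_of_nonneg_left h1 (hk_pos hτ z).le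
          _ = heatKernel d τ z * (M * (1 + ‖x₀‖)) + heatKernel d τ z * ‖z‖ * M := by ring
    · exact ((hk_continuous hτ).smul ((hf.fderiv_continuous hα).comp
        (continuous_const.sub continuous_id))).aestronglyMeasurable
    · refine Filter.Eventually.of_forall fun z => fun x _ => ?_
      have hns : ‖heatKernel d τ z • fderiv ℝ f (x - z)‖
          = heatKernel d τ z * ‖fderiv ℝ f (x - z)‖ := by
        simp [norm_smul, abs_of_nonneg (hk_pos hτ z).le]
      rw [hns]
      calc heatKernel d τ z * ‖fderiv ℝ f (x - z)‖
          ≤ heatKernel d τ z * M :=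
            mul_le_mul_of_nonneg_left (hf.2.2.1 _) (hk_pos hτ z).le
        _ ≤ heatKernel d τ z * (M * (1 + ‖x₀‖ + 1) + M * ‖z‖) := by
            have hM := hf.M_nonneg
            refine mul_le_mul_of_nonneg_left ?_ (hk_pos hτ z).le
            nlinarith [norm_nonneg z, norm_nonneg x₀]
    · exact ((hk_integrable hτ).mul_const (M * (1 + ‖x₀‖ + 1))).add
        ((hk_moment_integrable hτ).mul_const M) |>.congr
        (Filter.Eventually.of_forall fun z => by simp only [Pi.add_apply]; ring)
    · refine Filter.Eventually.of_forall fun z => fun x _ => ?_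
      have h1 : HasFDerivAt (fun x : E => x - z) (ContinuousLinearMap.id ℝ E) x := by
        simpa using (hasFDerivAt_id x).sub_const z
      have h2 : HasFDerivAt (fun x : E => f (x - z)) (fderiv ℝ f (x - z)) x := by
        have := ((hf.1 (x - z)).hasFDerivAt).comp x h1
        exact this
      exact h2.const_mul _

lemma hsDeriv_norm_le (hα : 0 < α) (hf : Nice d α M f) (hτ : 0 ≤ τ) (x : E) :
    ‖hsDeriv d τ f x‖ ≤ M := by
  rcases hτ.eq_or_lt with rfl | hτ
  · rw [hsDeriv, if_pos rfl]; exact hf.2.2.1 x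
  · rw [hsDeriv, if_neg hτ.ne']
    have hb : Integrable (fun z : E => heatKernel d τ z * M) := (hk_integrable hτ).mul_const M
    have := norm_integral_le_of_norm_le hb (Filter.Eventually.of_forall fun z => by
      have hns : ‖heatKernel d τ z • fderiv ℝ f (x - z)‖
          = heatKernel d τ z * ‖fderiv ℝ f (x - z)‖ := by
        simp [norm_smul, abs_of_nonneg (hk_pos hτ z).le]
      rw [hns]
      exact mul_le_mul_of_nonneg_left (hf.2.2.1 _) (hk_pos hτ z).le)
    refine this.trans ?_
    rw [integral_mul_const, hk_integral hτ, one_mul]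

lemma hsDeriv_holder (hα : 0 < α) (hf : Nice d α M f) (hτ : 0 ≤ τ) (x y : E) :
    ‖hsDeriv d τ f x - hsDeriv d τ f y‖ ≤ M * ‖x - y‖ ^ α := by
  rcases hτ.eq_or_lt with rfl | hτ
  · rw [hsDeriv, if_pos rfl, hsDeriv, if_pos rfl]; exact hf.2.2.2 x y
  · rw [hsDeriv, if_neg hτ.ne', hsDeriv, if_neg hτ.ne']
    rw [← integral_sub (hsDeriv_integrand_integrable hα hf hτ x)
      (hsDeriv_integrand_integrable hα hf hτ y)]
    have hb : Integrable (fun z : E => heatKernel d τ z * (M * ‖x - y‖ ^ α)) :=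
      (hk_integrable hτ).mul_const _
    refine (norm_integral_le_of_norm_le hb (Filter.Eventually.of_forall fun z => ?_)).trans ?_
    · have heq : heatKernel d τ z • fderiv ℝ f (x - z) - heatKernel d τ z • fderiv ℝ f (y - z)
          = heatKernel d τ z • (fderiv ℝ f (x - z) - fderiv ℝ f (y - z)) := by
        rw [smul_sub]
      rw [heq]
      have hns : ‖heatKernel d τ z • (fderiv ℝ f (x - z) - fderiv ℝ f (y - z))‖
          = heatKernel d τ z * ‖fderiv ℝ f (x - z) - fderiv ℝ f (y - z)‖ := by
        simp [norm_smul, abs_of_nonneg (hk_pos hτ z).le]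
      rw [hns]
      have hxy : (x - z) - (y - z) = x - y := by abel
      have h2 := hf.2.2.2 (x - z) (y - z)
      rw [hxy] at h2
      exact mul_le_mul_of_nonneg_left h2 (hk_pos hτ z).le
    · rw [integral_mul_const, hk_integral hτ, one_mul]

lemma hs_val_le (hα : 0 < α) (hf : Nice d α M f) (hτ : 0 ≤ τ) (hτT : τ ≤ T) (x : E) :
    |heatSemigroup d τ f x| ≤ M * (1 + ‖x‖) + M * (2 * Real.sqrt T * 2 ^ ((d : ℝ) / 2)) := by
  have hM := hf.M_nonneg
  have hKT : 0 ≤ 2 * Real.sqrt T * 2 ^ ((d : ℝ) / 2) := by positivity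
  rcases hτ.eq_or_lt with rfl | hτ
  · rw [heatSemigroup, if_pos rfl]
    have := hf.growth x
    nlinarith
  · rw [hs_rep hτ.ne']
    have hb : Integrable (fun z : E =>
        heatKernel d τ z * (M * (1 + ‖x‖)) + heatKernel d τ z * ‖z‖ * M) :=
      ((hk_integrable hτ).mul_const _).add ((hk_moment_integrable hτ).mul_const M)
    have hle : ‖∫ z : E, heatKernel d τ z * f (x - z)‖
        ≤ ∫ z : E, (heatKernel d τ z * (M * (1 + ‖x‖)) + heatKernel d τ z * ‖z‖ * M) := by
      refine norm_integral_le_of_norm_le hb (Filter.Eventually.of_forall fun z => ?_)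
      rw [Real.norm_eq_abs, abs_mul, abs_of_nonneg (hk_pos hτ z).le]
      have h1 : |f (x - z)| ≤ M * (1 + ‖x‖) + M * ‖z‖ := by
        have := hf.growth (x - z)
        have hn : ‖x - z‖ ≤ ‖x‖ + ‖z‖ := norm_sub_le _ _
        nlinarith
      calc heatKernel d τ z * |f (x - z)|
          ≤ heatKernel d τ z * (M * (1 + ‖x‖) + M * ‖z‖) :=
            mul_le_mul_of_nonneg_left h1 (hk_pos hτ z).le
        _ = heatKernel d τ z * (M * (1 + ‖x‖)) + heatKernel d τ z * ‖z‖ * M := by ring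
    rw [Real.norm_eq_abs] at hle
    refine hle.trans ?_
    rw [integral_add ((hk_integrable hτ).mul_const _) ((hk_moment_integrable hτ).mul_const M),
      integral_mul_const, integral_mul_const, hk_integral hτ, one_mul]
    have := hk_moment_le (d := d) hτ hτT
    nlinarith

end inner

lemma hk_contAt {τ₀ : ℝ} (hτ₀ : 0 < τ₀) (z : E) :
    ContinuousAt (fun τ => heatKernel d τ z) τ₀ := by
  have hne : 2 * Real.pi * τ₀ ≠ 0 := by positivity
  have h1 : ContinuousAt (fun τ : ℝ => (2 * Real.pi * τ) ^ (-(d : ℝ) / 2)) τ₀ := by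
    exact ((continuous_const.mul continuous_id).continuousAt).rpow_const (Or.inl hne)
  have h2 : ContinuousAt (fun τ : ℝ => Real.exp (-‖z‖ ^ 2 / (2 * τ))) τ₀ := by
    refine Real.continuous_exp.continuousAt.comp ?_
    exact ContinuousAt.div continuousAt_const
      ((continuous_const.mul continuous_id).continuousAt) (by positivity)
  exact h1.mul h2

lemma hk_le {τ τ₁ T' : ℝ} (h1 : 0 < τ₁) (h2 : τ₁ ≤ τ) (h3 : τ ≤ T') (z : E) :
    heatKernel d τ z
      ≤ (2 * Real.pi * τ₁) ^ (-(d : ℝ) / 2) * Real.exp (-(2 * T')⁻¹ * ‖z‖ ^ 2) := by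
  have hτ : 0 < τ := h1.trans_le h2
  have hT' : 0 < T' := hτ.trans_le h3
  rw [heatKernel]
  have hA : (2 * Real.pi * τ) ^ (-(d : ℝ) / 2) ≤ (2 * Real.pi * τ₁) ^ (-(d : ℝ) / 2) := by
    refine Real.rpow_le_rpow_of_nonpos (by positivity) ?_
      (by rw [neg_div]; exact neg_nonpos.2 (by positivity))
    have : (0:ℝ) < 2 * Real.pi := by positivity
    nlinarith
  have hB : Real.exp (-‖z‖ ^ 2 / (2 * τ)) ≤ Real.exp (-(2 * T')⁻¹ * ‖z‖ ^ 2) := by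
    rw [Real.exp_le_exp]
    rw [neg_div, neg_mul, neg_le_neg_iff]
    rw [inv_mul_eq_div]
    exact div_le_div_of_nonneg_left (by positivity) (by positivity) (by nlinarith)
  exact mul_le_mul hA hB (Real.exp_pos _).le (by positivity)

lemma integrable_gauss_mul_norm {b : ℝ} (hb : 0 < b) :
    Integrable (fun z : E => Real.exp (-b * ‖z‖ ^ 2) * ‖z‖) := by
  have hb2 : 0 < b / 2 := by positivity
  set c := Real.sqrt (2 / b) with hcdef
  have hc : 0 < c := Real.sqrt_pos.2 (by positivity)
  have hcsq : c ^ 2 = 2 / b := Real.sq_sqrt (by positivity)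
  refine ((integrable_gauss (d := d) hb2).const_mul c).mono' ?_
    (Filter.Eventually.of_forall fun z => ?_)
  · exact ((Real.continuous_exp.comp
      (continuous_const.mul (continuous_norm.pow 2))).mul continuous_norm).aestronglyMeasurable
  · rw [Real.norm_eq_abs, abs_of_nonneg (by positivity)]
    have h1 : ‖z‖ ≤ c * Real.exp ((‖z‖ / c) ^ 2) := le_mul_exp_sq hc (norm_nonneg z)
    have h2 : (‖z‖ / c) ^ 2 = b / 2 * ‖z‖ ^ 2 := by
      rw [div_pow, hcsq]
      field_simp
    calc Real.exp (-b * ‖z‖ ^ 2) * ‖z‖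
        ≤ Real.exp (-b * ‖z‖ ^ 2) * (c * Real.exp ((‖z‖ / c) ^ 2)) :=
          mul_le_mul_of_nonneg_left h1 (Real.exp_pos _).le
      _ = c * Real.exp (-(b / 2) * ‖z‖ ^ 2) := by
          rw [h2, ← mul_assoc, mul_comm (Real.exp _) c, mul_assoc, ← Real.exp_add]
          congr 2
          ring

section scont

variable {α M T t : ℝ} {h : ℝ → EuclideanSpace ℝ (Fin d) → ℝ}

lemma tendsto_h_eval (hα0 : 0 < α)
    (hNice : ∀ s ∈ Set.Icc (0:ℝ) T, Nice d α M (h s))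
    (hcont : ∀ s₀ ∈ Set.Icc (0 : ℝ) T, Filter.Tendsto
      (fun s => |h s 0 - h s₀ 0|
        + supNorm (fun x => gradient (h s) x - gradient (h s₀) x)
        + holderSem α (fun x => gradient (h s) x - gradient (h s₀) x))
      (nhdsWithin s₀ (Set.Icc (0 : ℝ) T)) (nhds 0))
    {s₀ : ℝ} (hs₀ : s₀ ∈ Set.Icc (0:ℝ) T) (y : E) :
    Tendsto (fun s => h s y) (nhdsWithin s₀ (Set.Icc (0:ℝ) T)) (nhds (h s₀ y)) ∧
    Tendsto (fun s => fderiv ℝ (h s) y) (nhdsWithin s₀ (Set.Icc (0:ℝ) T))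
      (nhds (fderiv ℝ (h s₀) y)) := by
  set δ : ℝ → ℝ := fun s => |h s 0 - h s₀ 0|
    + supNorm (fun x => gradient (h s) x - gradient (h s₀) x)
    + holderSem α (fun x => gradient (h s) x - gradient (h s₀) x) with hδdef
  have hδ : Tendsto δ (nhdsWithin s₀ (Set.Icc (0:ℝ) T)) (nhds 0) := hcont s₀ hs₀
  have key1 : ∀ s, |h s 0 - h s₀ 0| ≤ δ s := by
    intro s
    have h2 := supNorm_nonneg (fun x : E => gradient (h s) x - gradient (h s₀) x)
    have h3 := holderSem_nonneg α (fun x : E => gradient (h s) x - gradient (h s₀) x)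
    simp only [hδdef]
    linarith
  have key2 : ∀ s ∈ Set.Icc (0:ℝ) T, ∀ w : E,
      ‖fderiv ℝ (h s) w - fderiv ℝ (h s₀) w‖ ≤ δ s := by
    intro s hs w
    rw [← norm_gradient_sub_eq]
    have hb : ∀ x : E, ‖gradient (h s) x - gradient (h s₀) x‖ ≤ M + M := fun x =>
      (norm_sub_le _ _).trans (add_le_add
        (by rw [norm_gradient_eq]; exact (hNice s hs).2.2.1 x)
        (by rw [norm_gradient_eq]; exact (hNice s₀ hs₀).2.2.1 x))
    have hle := le_supNorm hb w
    have h1 := abs_nonneg (h s 0 - h s₀ 0)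
    have h3 := holderSem_nonneg α (fun x : E => gradient (h s) x - gradient (h s₀) x)
    simp only [hδdef]
    linarith
  have keyval : ∀ s ∈ Set.Icc (0:ℝ) T, |h s y - h s₀ y| ≤ δ s * (1 + ‖y‖) := by
    intro s hs
    set g : E → ℝ := fun w => h s w - h s₀ w with hgdef
    have hdiff' : ∀ w, DifferentiableAt ℝ g w := fun w =>
      ((hNice s hs).1 w).sub ((hNice s₀ hs₀).1 w)
    have hfd : ∀ w : E, ‖fderiv ℝ g w‖ ≤ δ s := by
      intro w
      rw [hgdef, fderiv_fun_sub ((hNice s hs).1 w) ((hNice s₀ hs₀).1 w)]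
      exact key2 s hs w
    have mvt : ‖g y - g 0‖ ≤ δ s * ‖y - 0‖ :=
      Convex.norm_image_sub_le_of_norm_fderiv_le (fun w _ => hdiff' w)
        (fun w _ => hfd w) convex_univ (Set.mem_univ 0) (Set.mem_univ y)
    rw [Real.norm_eq_abs, sub_zero] at mvt
    have hg0 : |g 0| ≤ δ s := key1 s
    calc |h s y - h s₀ y| = |g y| := rfl
      _ ≤ |g 0| + |g y - g 0| := by
          have := abs_add_le (g 0) (g y - g 0); simpa using this
      _ ≤ δ s + δ s * ‖y‖ := add_le_add hg0 mvt
      _ = δ s * (1 + ‖y‖) := by ring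
  constructor
  · rw [tendsto_iff_dist_tendsto_zero]
    refine squeeze_zero' (g := fun s => δ s * (1 + ‖y‖))
      (Filter.Eventually.of_forall fun _ => dist_nonneg) ?_ ?_
    · filter_upwards [self_mem_nhdsWithin] with s hs
      rw [Real.dist_eq]
      exact keyval s hs
    · have := hδ.mul_const (1 + ‖y‖)
      simpa using this
  · rw [tendsto_iff_dist_tendsto_zero]
    refine squeeze_zero' (g := δ)
      (Filter.Eventually.of_forall fun _ => dist_nonneg) ?_ ?_
    · filter_upwards [self_mem_nhdsWithin] with s hs
      rw [dist_eq_norm]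
      exact key2 s hs y
    · simpa using hδ

lemma hs_contOn_val (hα0 : 0 < α) (hT : 0 < T) (ht0 : 0 ≤ t) (htT : t ≤ T)
    (hNice : ∀ s ∈ Set.Icc (0:ℝ) T, Nice d α M (h s))
    (hte : ∀ s₀ ∈ Set.Icc (0:ℝ) T, ∀ y : E,
      Tendsto (fun s => h s y) (nhdsWithin s₀ (Set.Icc (0:ℝ) T)) (nhds (h s₀ y)))
    (x : E) :
    ContinuousOn (fun s => heatSemigroup d (s - t) (h s) x) (Set.Ioc t T) := by
  have hsub : Set.Ioc t T ⊆ Set.Icc 0 T := fun s hs => ⟨ht0.trans hs.1.le, hs.2⟩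
  have hMnn : 0 ≤ M := (hNice 0 ⟨le_refl 0, hT.le⟩).M_nonneg
  have h2T : 0 < (2*T)⁻¹ := by positivity
  intro s₀ hs₀
  have hts₀ : t < s₀ := hs₀.1
  have hs₀Icc : s₀ ∈ Set.Icc (0:ℝ) T := hsub hs₀
  set τ₁ : ℝ := (s₀ - t)/2 with hτ₁def
  have hτ₁ : 0 < τ₁ := by simp only [hτ₁def]; linarith
  set A : ℝ := (2 * Real.pi * τ₁) ^ (-(d : ℝ) / 2) with hAdef
  have hA : 0 < A := Real.rpow_pos_of_pos (by positivity) _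
  have hmono : nhdsWithin s₀ (Set.Ioc t T) ≤ nhdsWithin s₀ (Set.Icc (0:ℝ) T) :=
    nhdsWithin_mono _ hsub
  have evgood : ∀ᶠ s in nhdsWithin s₀ (Set.Ioc t T), s ∈ Set.Ioc t T ∧ τ₁ ≤ s - t := by
    have ev2 : ∀ᶠ s in nhdsWithin s₀ (Set.Ioc t T), (t + s₀)/2 < s :=
      nhdsWithin_le_nhds (eventually_gt_nhds (by linarith))
    filter_upwards [self_mem_nhdsWithin, ev2] with s hs1 hs2
    exact ⟨hs1, by simp only [hτ₁def]; linarith⟩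
  have ht1 : ∀ z : E, Tendsto (fun s => heatKernel d (s - t) z)
      (nhdsWithin s₀ (Set.Ioc t T)) (nhds (heatKernel d (s₀ - t) z)) := by
    intro z
    have hca : ContinuousAt (fun s : ℝ => heatKernel d (s - t) z) s₀ :=
      (hk_contAt (by linarith) z).comp (continuousAt_id.sub continuousAt_const)
    exact hca.tendsto.mono_left nhdsWithin_le_nhds
  have hlim : Tendsto (fun s => ∫ z : E, heatKernel d (s - t) z * h s (x - z))
      (nhdsWithin s₀ (Set.Ioc t T))
      (nhds (∫ z : E, heatKernel d (s₀ - t) z * h s₀ (x - z))) := by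
    apply tendsto_integral_filter_of_dominated_convergence
      (bound := fun z : E => A * (M * (1 + ‖x‖)) * Real.exp (-(2*T)⁻¹ * ‖z‖^2)
        + A * M * (Real.exp (-(2*T)⁻¹ * ‖z‖^2) * ‖z‖))
    · filter_upwards [self_mem_nhdsWithin] with s hs
      have hst : 0 < s - t := by have := hs.1; linarith
      exact ((hk_continuous hst).mul (((hNice s (hsub hs)).1.continuous).comp
        (continuous_const.sub continuous_id))).aestronglyMeasurable
    · filter_upwards [evgood] with s hs
      refine Filter.Eventually.of_forall fun z => ?_
      obtain ⟨hsIoc, hτ₁le⟩ := hs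
      have hst : 0 < s - t := hτ₁.trans_le hτ₁le
      have hsT : s - t ≤ T := by have := hsIoc.2; linarith
      have hkb : heatKernel d (s - t) z ≤ A * Real.exp (-(2*T)⁻¹ * ‖z‖^2) :=
        hk_le hτ₁ hτ₁le hsT z
      have hgrow : |h s (x - z)| ≤ M * (1 + ‖x‖) + M * ‖z‖ := by
        have := (hNice s (hsub hsIoc)).growth (x - z)
        have hn : ‖x - z‖ ≤ ‖x‖ + ‖z‖ := norm_sub_le _ _
        nlinarith
      rw [Real.norm_eq_abs, abs_mul, abs_of_nonneg (hk_pos hst z).le]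
      have hexp : (0:ℝ) ≤ Real.exp (-(2*T)⁻¹ * ‖z‖^2) := (Real.exp_pos _).le
      calc heatKernel d (s - t) z * |h s (x - z)|
          ≤ (A * Real.exp (-(2*T)⁻¹ * ‖z‖^2)) * (M * (1 + ‖x‖) + M * ‖z‖) := by
            refine mul_le_mul hkb hgrow (abs_nonneg _) (by positivity)
        _ = A * (M * (1 + ‖x‖)) * Real.exp (-(2*T)⁻¹ * ‖z‖^2)
            + A * M * (Real.exp (-(2*T)⁻¹ * ‖z‖^2) * ‖z‖) := by ring
    · exact ((integrable_gauss h2T).const_mul _).add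
        ((integrable_gauss_mul_norm h2T).const_mul _)
    · refine Filter.Eventually.of_forall fun z => ?_
      exact (ht1 z).mul ((hte s₀ hs₀Icc (x - z)).mono_left hmono)
  have heq : (fun s => ∫ z : E, heatKernel d (s - t) z * h s (x - z))
      =ᶠ[nhdsWithin s₀ (Set.Ioc t T)] (fun s => heatSemigroup d (s - t) (h s) x) := by
    filter_upwards [self_mem_nhdsWithin] with s hs
    have hst : s - t ≠ 0 := by have := hs.1; intro hc; linarith [sub_eq_zero.1 hc]
    exact (hs_rep hst (h s) x).symm
  have hfin : Tendsto (fun s => heatSemigroup d (s - t) (h s) x)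
      (nhdsWithin s₀ (Set.Ioc t T)) (nhds (heatSemigroup d (s₀ - t) (h s₀) x)) := by
    rw [hs_rep (show s₀ - t ≠ 0 by intro hc; linarith [sub_eq_zero.1 hc]) (h s₀) x]
    exact hlim.congr' heq
  exact hfin

lemma hs_contOn_deriv (hα0 : 0 < α) (hT : 0 < T) (ht0 : 0 ≤ t) (htT : t ≤ T)
    (hNice : ∀ s ∈ Set.Icc (0:ℝ) T, Nice d α M (h s))
    (htd : ∀ s₀ ∈ Set.Icc (0:ℝ) T, ∀ y : E,
      Tendsto (fun s => fderiv ℝ (h s) y) (nhdsWithin s₀ (Set.Icc (0:ℝ) T))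
        (nhds (fderiv ℝ (h s₀) y)))
    (x : E) :
    ContinuousOn (fun s => hsDeriv d (s - t) (h s) x) (Set.Ioc t T) := by
  have hsub : Set.Ioc t T ⊆ Set.Icc 0 T := fun s hs => ⟨ht0.trans hs.1.le, hs.2⟩
  have hMnn : 0 ≤ M := (hNice 0 ⟨le_refl 0, hT.le⟩).M_nonneg
  have h2T : 0 < (2*T)⁻¹ := by positivity
  intro s₀ hs₀
  have hts₀ : t < s₀ := hs₀.1
  have hs₀Icc : s₀ ∈ Set.Icc (0:ℝ) T := hsub hs₀
  set τ₁ : ℝ := (s₀ - t)/2 with hτ₁def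
  have hτ₁ : 0 < τ₁ := by simp only [hτ₁def]; linarith
  set A : ℝ := (2 * Real.pi * τ₁) ^ (-(d : ℝ) / 2) with hAdef
  have hA : 0 < A := Real.rpow_pos_of_pos (by positivity) _
  have hmono : nhdsWithin s₀ (Set.Ioc t T) ≤ nhdsWithin s₀ (Set.Icc (0:ℝ) T) :=
    nhdsWithin_mono _ hsub
  have evgood : ∀ᶠ s in nhdsWithin s₀ (Set.Ioc t T), s ∈ Set.Ioc t T ∧ τ₁ ≤ s - t := by
    have ev2 : ∀ᶠ s in nhdsWithin s₀ (Set.Ioc t T), (t + s₀)/2 < s :=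
      nhdsWithin_le_nhds (eventually_gt_nhds (by linarith))
    filter_upwards [self_mem_nhdsWithin, ev2] with s hs1 hs2
    exact ⟨hs1, by simp only [hτ₁def]; linarith⟩
  have ht1 : ∀ z : E, Tendsto (fun s => heatKernel d (s - t) z)
      (nhdsWithin s₀ (Set.Ioc t T)) (nhds (heatKernel d (s₀ - t) z)) := by
    intro z
    have hca : ContinuousAt (fun s : ℝ => heatKernel d (s - t) z) s₀ :=
      (hk_contAt (by linarith) z).comp (continuousAt_id.sub continuousAt_const)
    exact hca.tendsto.mono_left nhdsWithin_le_nhds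
  have hlim : Tendsto (fun s => ∫ z : E, heatKernel d (s - t) z • fderiv ℝ (h s) (x - z))
      (nhdsWithin s₀ (Set.Ioc t T))
      (nhds (∫ z : E, heatKernel d (s₀ - t) z • fderiv ℝ (h s₀) (x - z))) := by
    apply tendsto_integral_filter_of_dominated_convergence
      (bound := fun z : E => A * M * Real.exp (-(2*T)⁻¹ * ‖z‖^2))
    · filter_upwards [self_mem_nhdsWithin] with s hs
      have hst : 0 < s - t := by have := hs.1; linarith
      exact ((hk_continuous hst).smul (((hNice s (hsub hs)).fderiv_continuous hα0).comp
        (continuous_const.sub continuous_id))).aestronglyMeasurable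
    · filter_upwards [evgood] with s hs
      refine Filter.Eventually.of_forall fun z => ?_
      obtain ⟨hsIoc, hτ₁le⟩ := hs
      have hst : 0 < s - t := hτ₁.trans_le hτ₁le
      have hsT : s - t ≤ T := by have := hsIoc.2; linarith
      have hkb : heatKernel d (s - t) z ≤ A * Real.exp (-(2*T)⁻¹ * ‖z‖^2) :=
        hk_le hτ₁ hτ₁le hsT z
      have hns : ‖heatKernel d (s - t) z • fderiv ℝ (h s) (x - z)‖
          = heatKernel d (s - t) z * ‖fderiv ℝ (h s) (x - z)‖ := by
        simp [norm_smul, abs_of_nonneg (hk_pos hst z).le]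
      rw [hns]
      have hfb : ‖fderiv ℝ (h s) (x - z)‖ ≤ M := (hNice s (hsub hsIoc)).2.2.1 _
      calc heatKernel d (s - t) z * ‖fderiv ℝ (h s) (x - z)‖
          ≤ (A * Real.exp (-(2*T)⁻¹ * ‖z‖^2)) * M :=
            mul_le_mul hkb hfb (norm_nonneg _) (by positivity)
        _ = A * M * Real.exp (-(2*T)⁻¹ * ‖z‖^2) := by ring
    · exact (integrable_gauss h2T).const_mul _
    · refine Filter.Eventually.of_forall fun z => ?_
      exact (ht1 z).smul ((htd s₀ hs₀Icc (x - z)).mono_left hmono)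
  have heq : (fun s => ∫ z : E, heatKernel d (s - t) z • fderiv ℝ (h s) (x - z))
      =ᶠ[nhdsWithin s₀ (Set.Ioc t T)] (fun s => hsDeriv d (s - t) (h s) x) := by
    filter_upwards [self_mem_nhdsWithin] with s hs
    have hst : s - t ≠ 0 := by have := hs.1; intro hc; linarith [sub_eq_zero.1 hc]
    rw [hsDeriv, if_neg hst]
  have hfin : Tendsto (fun s => hsDeriv d (s - t) (h s) x)
      (nhdsWithin s₀ (Set.Ioc t T)) (nhds (hsDeriv d (s₀ - t) (h s₀) x)) := by
    rw [show hsDeriv d (s₀ - t) (h s₀) x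
      = ∫ z : E, heatKernel d (s₀ - t) z • fderiv ℝ (h s₀) (x - z) from by
        rw [hsDeriv, if_neg (by intro hc; linarith [sub_eq_zero.1 hc])]]
    exact hlim.congr' heq
  exact hfin

end scont


end Aux

/-- There is a constant `c > 0` (depending only on `d`, `α`, `T`) such that
for every map `h : [0,T] → D𝒞^α`, continuous in the `D𝒞^α` norm and with
`sup_{s ∈ [0,T]} ‖h(s,·)‖_{D𝒞^α} ≤ M`, the function
`v(t,x) = ∫_t^T (P_{s−t} h(s,·))(x) ds` satisfies `v(t,·) ∈ D𝒞^α` for every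
`t ∈ [0,T]` and `sup_{t ∈ [0,T]} ‖v(t,·)‖_{D𝒞^α} ≤ c T M`. -/
theorem stmt_8 (d : ℕ) (hd : 1 ≤ d) (α : ℝ) (hα : α ∈ Set.Ioo (0 : ℝ) 1)
    (T : ℝ) (hT : 0 < T) :
    ∃ c : ℝ, 0 < c ∧
      ∀ (h : ℝ → EuclideanSpace ℝ (Fin d) → ℝ) (M : ℝ),
        (∀ s ∈ Set.Icc (0 : ℝ) T, Differentiable ℝ (h s)) →
        (∀ s ∈ Set.Icc (0 : ℝ) T, (∃ C, ∀ x, ‖gradient (h s) x‖ ≤ C) ∧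
            (∃ C, ∀ x y, ‖gradient (h s) x - gradient (h s) y‖ ≤ C * ‖x - y‖ ^ α)) →
        (∀ s₀ ∈ Set.Icc (0 : ℝ) T, Filter.Tendsto
          (fun s => |h s 0 - h s₀ 0|
            + supNorm (fun x => gradient (h s) x - gradient (h s₀) x)
            + holderSem α (fun x => gradient (h s) x - gradient (h s₀) x))
          (nhdsWithin s₀ (Set.Icc (0 : ℝ) T)) (nhds 0)) →
        (∀ s ∈ Set.Icc (0 : ℝ) T,
          |h s 0| + supNorm (gradient (h s)) + holderSem α (gradient (h s)) ≤ M) →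
        ∀ v : ℝ → EuclideanSpace ℝ (Fin d) → ℝ,
          (∀ t x, v t x = ∫ s in t..T, heatSemigroup d (s - t) (h s) x) →
          ∀ t ∈ Set.Icc (0 : ℝ) T,
            Differentiable ℝ (v t) ∧
            (∃ C, ∀ x, ‖gradient (v t) x‖ ≤ C) ∧
            (∃ C, ∀ x y, ‖gradient (v t) x - gradient (v t) y‖ ≤ C * ‖x - y‖ ^ α) ∧
            |v t 0| + supNorm (gradient (v t)) + holderSem α (gradient (v t))
              ≤ c * T * M := by
  obtain ⟨hα0, hα1⟩ := hα
  refine ⟨3 + 2 * Real.sqrt T * 2 ^ ((d : ℝ) / 2), by positivity, ?_⟩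
  intro h M hdiff hbnd hcont hM v hv t ht
  set K : ℝ := 2 * Real.sqrt T * 2 ^ ((d : ℝ) / 2) with hKdef
  have hK0 : 0 ≤ K := by positivity
  have hM0 : 0 ≤ M := by
    have h1 := hM 0 ⟨le_refl 0, hT.le⟩
    have h2 := abs_nonneg (h 0 0)
    have h3 := supNorm_nonneg (gradient (h 0))
    have h4 := holderSem_nonneg α (gradient (h 0))
    linarith
  have hNice : ∀ s ∈ Set.Icc (0:ℝ) T, Nice d α M (h s) := by
    intro s hs
    obtain ⟨⟨C1, hC1⟩, ⟨C2, hC2⟩⟩ := hbnd s hs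
    have hMs := hM s hs
    have h2 := supNorm_nonneg (gradient (h s))
    have h3 := holderSem_nonneg α (gradient (h s))
    have h4 := abs_nonneg (h s 0)
    refine ⟨hdiff s hs, by linarith, ?_, ?_⟩
    · intro y
      rw [← norm_gradient_eq]
      calc ‖gradient (h s) y‖ ≤ supNorm (gradient (h s)) := le_supNorm hC1 y
        _ ≤ M := by linarith
    · intro x y
      rw [← norm_gradient_sub_eq]
      refine (le_holderSem hα0 hC2 x y).trans ?_
      exact mul_le_mul_of_nonneg_right (by linarith)
        (Real.rpow_nonneg (norm_nonneg _) _)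
  obtain ⟨ht0, htT⟩ := ht
  have hte : ∀ s₀ ∈ Set.Icc (0:ℝ) T, ∀ y : EuclideanSpace ℝ (Fin d),
      Filter.Tendsto (fun s => h s y) (nhdsWithin s₀ (Set.Icc (0:ℝ) T)) (nhds (h s₀ y)) :=
    fun s₀ hs₀ y => (tendsto_h_eval hα0 hNice hcont hs₀ y).1
  have htd : ∀ s₀ ∈ Set.Icc (0:ℝ) T, ∀ y : EuclideanSpace ℝ (Fin d),
      Filter.Tendsto (fun s => fderiv ℝ (h s) y) (nhdsWithin s₀ (Set.Icc (0:ℝ) T))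
        (nhds (fderiv ℝ (h s₀) y)) :=
    fun s₀ hs₀ y => (tendsto_h_eval hα0 hNice hcont hs₀ y).2
  have hcv := fun x : EuclideanSpace ℝ (Fin d) => hs_contOn_val hα0 hT ht0 htT hNice hte x
  have hcd := fun x : EuclideanSpace ℝ (Fin d) => hs_contOn_deriv hα0 hT ht0 htT hNice htd x
  set μ := volume.restrict (Set.Ioc t T) with hμdef
  have hμreal : (μ Set.univ).toReal = T - t := by
    rw [hμdef, Measure.restrict_apply_univ, Real.volume_Ioc,
      ENNReal.toReal_ofReal (by linarith)]
  have hIoc : ∀ s ∈ Set.Ioc t T, s ∈ Set.Icc (0:ℝ) T :=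
    fun s hs => ⟨ht0.trans hs.1.le, hs.2⟩
  have hconstInt : ∀ c : ℝ, Integrable (fun _ : ℝ => c) μ := fun c => by
    rw [hμdef]
    exact integrableOn_const (by rw [Real.volume_Ioc]; exact ENNReal.ofReal_ne_top)
  have hvt : v t = fun x => ∫ s, heatSemigroup d (s - t) (h s) x ∂μ := by
    funext x
    rw [hv t x, intervalIntegral.integral_of_le htT]
  have hvalInt : ∀ x : EuclideanSpace ℝ (Fin d), Integrable (fun s => heatSemigroup d (s - t) (h s) x) μ := by
    intro x
    refine Integrable.mono' (g := fun _ : ℝ => M * (1 + ‖x‖) + M * K)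
      (hconstInt _) ((hcv x).aestronglyMeasurable measurableSet_Ioc) ?_
    rw [hμdef, ae_restrict_iff' measurableSet_Ioc]
    refine Filter.Eventually.of_forall fun s hs => ?_
    rw [Real.norm_eq_abs]
    exact hs_val_le hα0 (hNice s (hIoc s hs)) (by linarith [hs.1])
      (by have := hs.2; linarith) x
  have hderInt : ∀ x : EuclideanSpace ℝ (Fin d), Integrable (fun s => hsDeriv d (s - t) (h s) x) μ := by
    intro x
    refine Integrable.mono' (g := fun _ : ℝ => M)
      (hconstInt _) ((hcd x).aestronglyMeasurable measurableSet_Ioc) ?_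
    rw [hμdef, ae_restrict_iff' measurableSet_Ioc]
    exact Filter.Eventually.of_forall fun s hs =>
      hsDeriv_norm_le hα0 (hNice s (hIoc s hs)) (by linarith [hs.1]) x
  have hFd : ∀ x₀ : EuclideanSpace ℝ (Fin d), HasFDerivAt (v t) (∫ s, hsDeriv d (s - t) (h s) x₀ ∂μ) x₀ := by
    intro x₀
    rw [hvt]
    apply hasFDerivAt_integral_of_dominated_of_fderiv_le (s := Metric.ball x₀ 1)
      (bound := fun _ : ℝ => M)
      (F' := fun x s => hsDeriv d (s - t) (h s) x) (Metric.ball_mem_nhds x₀ one_pos)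
    · exact Filter.Eventually.of_forall fun x =>
        (hcv x).aestronglyMeasurable measurableSet_Ioc
    · exact hvalInt x₀
    · exact (hcd x₀).aestronglyMeasurable measurableSet_Ioc
    · rw [hμdef, ae_restrict_iff' measurableSet_Ioc]
      exact Filter.Eventually.of_forall fun s hs => fun x _ =>
        hsDeriv_norm_le hα0 (hNice s (hIoc s hs)) (by linarith [hs.1]) x
    · exact hconstInt _
    · rw [hμdef, ae_restrict_iff' measurableSet_Ioc]
      exact Filter.Eventually.of_forall fun s hs => fun x _ =>
        hsDeriv_hasFDerivAt hα0 (hNice s (hIoc s hs)) (by linarith [hs.1]) x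
  have hdiffv : Differentiable ℝ (v t) := fun x => (hFd x).differentiableAt
  have hfderiv : ∀ x : EuclideanSpace ℝ (Fin d), fderiv ℝ (v t) x = ∫ s, hsDeriv d (s - t) (h s) x ∂μ :=
    fun x => (hFd x).fderiv
  have hgrad : ∀ x : EuclideanSpace ℝ (Fin d), ‖gradient (v t) x‖ ≤ M * T := by
    intro x
    rw [norm_gradient_eq, hfderiv]
    have hae : ∀ᵐ s ∂μ, ‖hsDeriv d (s - t) (h s) x‖ ≤ M := by
      rw [hμdef, ae_restrict_iff' measurableSet_Ioc]
      exact Filter.Eventually.of_forall fun s hs =>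
        hsDeriv_norm_le hα0 (hNice s (hIoc s hs)) (by linarith [hs.1]) x
    have hle := norm_integral_le_of_norm_le (hconstInt M) hae
    rw [integral_const, measureReal_def, hμreal, smul_eq_mul] at hle
    refine hle.trans ?_
    nlinarith
  have hhold : ∀ x y : EuclideanSpace ℝ (Fin d), ‖gradient (v t) x - gradient (v t) y‖
      ≤ M * T * ‖x - y‖ ^ α := by
    intro x y
    rw [norm_gradient_sub_eq, hfderiv, hfderiv, ← integral_sub (hderInt x) (hderInt y)]
    have hae : ∀ᵐ s ∂μ, ‖hsDeriv d (s - t) (h s) x - hsDeriv d (s - t) (h s) y‖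
        ≤ M * ‖x - y‖ ^ α := by
      rw [hμdef, ae_restrict_iff' measurableSet_Ioc]
      exact Filter.Eventually.of_forall fun s hs =>
        hsDeriv_holder hα0 (hNice s (hIoc s hs)) (by linarith [hs.1]) x y
    have hle := norm_integral_le_of_norm_le (hconstInt _) hae
    rw [integral_const, measureReal_def, hμreal, smul_eq_mul] at hle
    refine hle.trans ?_
    have hpow : (0:ℝ) ≤ ‖x - y‖ ^ α := Real.rpow_nonneg (norm_nonneg _) _
    nlinarith [mul_nonneg (mul_nonneg ht0 hM0) hpow]
  have hval : |v t 0| ≤ T * (M * (1 + K)) := by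
    have hv0 : v t 0 = ∫ s, heatSemigroup d (s - t) (h s) (0:EuclideanSpace ℝ (Fin d)) ∂μ := by rw [hvt]
    rw [hv0]
    have hae : ∀ᵐ s ∂μ, ‖heatSemigroup d (s - t) (h s) (0:EuclideanSpace ℝ (Fin d))‖
        ≤ M * (1 + ‖(0:EuclideanSpace ℝ (Fin d))‖) + M * K := by
      rw [hμdef, ae_restrict_iff' measurableSet_Ioc]
      refine Filter.Eventually.of_forall fun s hs => ?_
      rw [Real.norm_eq_abs]
      exact hs_val_le hα0 (hNice s (hIoc s hs)) (by linarith [hs.1])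
        (by have := hs.2; linarith) _
    have hle := norm_integral_le_of_norm_le (hconstInt _) hae
    rw [integral_const, measureReal_def, hμreal, smul_eq_mul] at hle
    rw [← Real.norm_eq_abs]
    refine hle.trans ?_
    rw [norm_zero]
    nlinarith [mul_nonneg ht0 hM0, mul_nonneg (mul_nonneg ht0 hM0) hK0]
  refine ⟨hdiffv, ⟨M * T, hgrad⟩, ⟨M * T, hhold⟩, ?_⟩
  have hs1 : supNorm (gradient (v t)) ≤ M * T :=
    supNorm_le (mul_nonneg hM0 hT.le) hgrad
  have hs2 : holderSem α (gradient (v t)) ≤ M * T :=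
    holderSem_le (mul_nonneg hM0 hT.le) hhold
  have hring : (3 + K) * T * M = T * (M * (1 + K)) + M * T + M * T := by ring
  linarith
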